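/- Let θ be a symmetric probability measure on ℝ supported on a finite set, with variance V = ∫ x² θ(dx) > 0, and let β > 0 satisfy βV ≤ 2. Define the tilted product measure P_{β} on ℝ² by P_β(dy dz) proportional to exp(β·y·z)·θ(dy)·θ(dz). Then E^{P_β}[y·z] ≥ V·tanh(βV). -/

import Mathlib

open MeasureTheory

section helpers
open Real Set

lemma sinh_le_mul_cosh' {x : ℝ} (hx : 0 ≤ x) : Real.sinh x ≤ x * Real.cosh x := by
  have hmono : Monotone (fun x : ℝ => x * Real.cosh x - Real.sinh x) := by
    apply monotone_of_hasDerivAt_nonneg (f' := fun x => x * Real.sinh x)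
    · intro x
      have h1 : HasDerivAt (fun x : ℝ => x * Real.cosh x)
          (1 * Real.cosh x + x * Real.sinh x) x :=
        (hasDerivAt_id x).mul (Real.hasDerivAt_cosh x)
      have h2 := h1.sub (Real.hasDerivAt_sinh x)
      have he : x * Real.sinh x = 1 * Real.cosh x + x * Real.sinh x - Real.cosh x := by ring
      rw [he]; exact h2
    · intro x
      rcases le_or_gt 0 x with h | h
      · exact mul_nonneg h (Real.sinh_nonneg_iff.2 h)
      · have h2 : Real.sinh x ≤ 0 := by
          simpa using Real.sinh_le_sinh.2 h.le
        calc (0:ℝ) ≤ (-x) * (-Real.sinh x) := mul_nonneg (by linarith) (by linarith)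
          _ = x * Real.sinh x := by ring
  have := hmono hx
  simpa using this

lemma G_nonneg' (a b c s : ℝ) (ha : 0 ≤ a) (hb : b ≤ 4*a) (hs : 0 < s)
    (hrs : a*(Real.sinh s + s*Real.cosh s) - b*Real.sinh s - c*s = 0)
    (hGs : 2*a*(s*Real.sinh s) - 2*b*Real.cosh s = 0) :
    ∀ t, 0 ≤ t → 0 ≤ 2*a*(t*Real.sinh t) - 2*b*Real.cosh t - c*(t^2 - s^2) := by
  set r : ℝ → ℝ := fun t => a*(Real.sinh t + t*Real.cosh t) - b*Real.sinh t - c*t with hr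
  set r' : ℝ → ℝ := fun t => a*(2*Real.cosh t + t*Real.sinh t) - b*Real.cosh t - c with hr'
  set G : ℝ → ℝ := fun t => 2*a*(t*Real.sinh t) - 2*b*Real.cosh t - c*(t^2 - s^2) with hG
  have hdr : ∀ t, HasDerivAt r (r' t) t := by
    intro t
    have h1 : HasDerivAt (fun t : ℝ => t * Real.cosh t)
        (1 * Real.cosh t + t * Real.sinh t) t := (hasDerivAt_id t).mul (Real.hasDerivAt_cosh t)
    have h2 := ((Real.hasDerivAt_sinh t).add h1).const_mul a
    have h3 := (Real.hasDerivAt_sinh t).const_mul b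
    have h4 := (hasDerivAt_id t).const_mul c
    have h5 := (h2.sub h3).sub h4
    have he : r' t = a * (Real.cosh t + (1 * Real.cosh t + t * Real.sinh t)) - b * Real.cosh t
        - c * 1 := by simp only [hr']; ring
    rw [he]; exact h5
  have hdG : ∀ t, HasDerivAt G (2 * r t) t := by
    intro t
    have h1 : HasDerivAt (fun t : ℝ => t * Real.sinh t)
        (1 * Real.sinh t + t * Real.cosh t) t := (hasDerivAt_id t).mul (Real.hasDerivAt_sinh t)
    have h2 := h1.const_mul (2*a)
    have h3 := (Real.hasDerivAt_cosh t).const_mul (2*b)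
    have h4 : HasDerivAt (fun t : ℝ => t^2 - s^2) (2*t) t := by
      simpa using ((hasDerivAt_pow 2 t).sub_const (s^2))
    have h5 := (h2.sub h3).sub (h4.const_mul c)
    have he : 2 * r t = 2*a * (1 * Real.sinh t + t * Real.cosh t) - 2*b * Real.sinh t
        - c * (2*t) := by simp only [hr]; ring
    rw [he]; exact h5
  have hdr' : ∀ t, HasDerivAt r' (a*(3*Real.sinh t + t*Real.cosh t) - b*Real.sinh t) t := by
    intro t
    have h1 : HasDerivAt (fun t : ℝ => t * Real.sinh t)
        (1 * Real.sinh t + t * Real.cosh t) t := (hasDerivAt_id t).mul (Real.hasDerivAt_sinh t)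
    have h2 := (((Real.hasDerivAt_cosh t).const_mul (2:ℝ)).add h1).const_mul a
    have h3 := (Real.hasDerivAt_cosh t).const_mul b
    have h5 := (h2.sub h3).sub_const c
    have he : a*(3*Real.sinh t + t*Real.cosh t) - b*Real.sinh t
        = a * (2 * Real.sinh t + (1 * Real.sinh t + t * Real.cosh t)) - b * Real.sinh t := by ring
    rw [he]; exact h5
  have hr'mono : MonotoneOn r' (Ici 0) := by
    apply monotoneOn_of_hasDerivWithinAt_nonneg (convex_Ici 0)
      (fun t _ => (hdr' t).continuousAt.continuousWithinAt)
      (fun t ht => ((hdr' t).hasDerivWithinAt))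
    intro t ht
    rw [interior_Ici] at ht
    have ht0 : (0:ℝ) ≤ t := le_of_lt ht
    have hsh : 0 ≤ Real.sinh t := Real.sinh_nonneg_iff.2 ht0
    have h1 : Real.sinh t ≤ t * Real.cosh t := sinh_le_mul_cosh' ht0
    nlinarith
  have hr0 : r 0 = 0 := by simp [hr]
  have hrs0 : r s = 0 := by simpa only [hr] using hrs
  obtain ⟨c0, hc0mem, hc0⟩ := exists_hasDerivAt_eq_slope r r' hs
    (fun t _ => (hdr t).continuousAt.continuousWithinAt) (fun t _ => hdr t)
  rw [hr0, hrs0] at hc0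
  simp only [sub_zero, zero_div] at hc0
  have hc00 : 0 < c0 := hc0mem.1
  have hc0s : c0 < s := hc0mem.2
  have hmonoR : MonotoneOn r (Ici c0) := by
    apply monotoneOn_of_hasDerivWithinAt_nonneg (convex_Ici c0)
      (fun t _ => (hdr t).continuousAt.continuousWithinAt)
      (fun t ht => (hdr t).hasDerivWithinAt)
    intro t ht
    rw [interior_Ici] at ht
    have h := hr'mono (mem_Ici.2 hc00.le) (mem_Ici.2 (hc00.trans ht).le) ht.le
    rw [hc0] at h; exact h
  have hrneg : ∀ t ∈ Icc 0 s, r t ≤ 0 := by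
    have hanti : AntitoneOn r (Icc 0 c0) := by
      apply antitoneOn_of_hasDerivWithinAt_nonpos (convex_Icc 0 c0)
        (fun t _ => (hdr t).continuousAt.continuousWithinAt)
        (fun t ht => (hdr t).hasDerivWithinAt)
      intro t ht
      rw [interior_Icc] at ht
      have h := hr'mono (mem_Ici.2 ht.1.le) (mem_Ici.2 hc00.le) ht.2.le
      rw [hc0] at h; exact h
    intro t ht
    rcases le_or_gt t c0 with h | h
    · have h2 := hanti (left_mem_Icc.2 hc00.le) ⟨ht.1, h⟩ ht.1
      rw [hr0] at h2; exact h2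
    · have h2 := hmonoR (mem_Ici.2 h.le) (mem_Ici.2 hc0s.le) ht.2
      rw [hrs0] at h2; exact h2
  have hrpos : ∀ t, s ≤ t → 0 ≤ r t := by
    intro t ht
    have h2 := hmonoR (mem_Ici.2 hc0s.le) (mem_Ici.2 (hc0s.le.trans ht)) ht
    rw [hrs0] at h2; exact h2
  have hGs0 : G s = 0 := by
    simp only [hG, sub_self, mul_zero, sub_zero]; exact hGs
  have hGanti : AntitoneOn G (Icc 0 s) := by
    apply antitoneOn_of_hasDerivWithinAt_nonpos (convex_Icc 0 s)
      (fun t _ => (hdG t).continuousAt.continuousWithinAt)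
      (fun t ht => (hdG t).hasDerivWithinAt)
    intro t ht
    rw [interior_Icc] at ht
    have := hrneg t ⟨ht.1.le, ht.2.le⟩
    linarith
  have hGmono : MonotoneOn G (Ici s) := by
    apply monotoneOn_of_hasDerivWithinAt_nonneg (convex_Ici s)
      (fun t _ => (hdG t).continuousAt.continuousWithinAt)
      (fun t ht => (hdG t).hasDerivWithinAt)
    intro t ht
    rw [interior_Ici] at ht
    have := hrpos t ht.le
    linarith
  intro t ht
  rcases le_or_gt t s with h | h
  · have h2 := hGanti ⟨ht, h⟩ ⟨hs.le, le_refl s⟩ h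
    rw [hGs0] at h2; exact h2
  · have h2 := hGmono (mem_Ici.2 le_rfl) (mem_Ici.2 h.le) h.le
    rw [hGs0] at h2; exact h2

lemma integrable_helper (θ : Measure ℝ) [IsProbabilityMeasure θ]
    (hfin : ∃ s : Finset ℝ, θ ((s : Set ℝ)ᶜ) = 0)
    (f : ℝ × ℝ → ℝ) (hf : Continuous f) : Integrable f (θ.prod θ) := by
  obtain ⟨s, hs⟩ := hfin
  have hne : s.Nonempty := by
    rcases s.eq_empty_or_nonempty with h | h
    · exfalso
      rw [h] at hs
      simp at hs
    · exact h
  set T : Finset (ℝ × ℝ) := s ×ˢ s with hT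
  have hTne : T.Nonempty := hne.product hne
  set C : ℝ := T.sup' hTne (fun p => ‖f p‖) with hC
  have hnull : (θ.prod θ) ((↑T : Set (ℝ × ℝ))ᶜ) = 0 := by
    have hsub : ((↑T : Set (ℝ × ℝ)))ᶜ ⊆
        ((↑s : Set ℝ)ᶜ ×ˢ (univ : Set ℝ)) ∪ ((univ : Set ℝ) ×ˢ (↑s : Set ℝ)ᶜ) := by
      intro p hp
      simp only [hT, Finset.coe_product, Set.mem_compl_iff, Set.mem_prod] at hp
      by_cases h1 : p.1 ∈ (↑s : Set ℝ)
      · right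
        refine ⟨trivial, fun h2 => hp ⟨h1, h2⟩⟩
      · left
        exact ⟨h1, trivial⟩
    refine le_antisymm ?_ (by simp)
    calc (θ.prod θ) ((↑T : Set (ℝ × ℝ))ᶜ)
        ≤ (θ.prod θ) (((↑s : Set ℝ)ᶜ ×ˢ (univ : Set ℝ)) ∪ ((univ : Set ℝ) ×ˢ (↑s : Set ℝ)ᶜ)) :=
          measure_mono hsub
      _ ≤ (θ.prod θ) ((↑s : Set ℝ)ᶜ ×ˢ (univ : Set ℝ))
          + (θ.prod θ) ((univ : Set ℝ) ×ˢ (↑s : Set ℝ)ᶜ) := measure_union_le _ _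
      _ = 0 := by
          rw [Measure.prod_prod, Measure.prod_prod, hs]
          simp
  have hae : ∀ᵐ p ∂(θ.prod θ), ‖f p‖ ≤ C := by
    have h1 : ∀ᵐ p ∂(θ.prod θ), p ∈ (↑T : Set (ℝ × ℝ)) := by
      rw [ae_iff]
      convert hnull using 2
      rfl
    filter_upwards [h1] with p hp
    exact Finset.le_sup' (fun p => ‖f p‖) hp
  exact Integrable.mono' (integrable_const C) hf.aestronglyMeasurable hae

lemma sym_helper (θ : Measure ℝ) [IsProbabilityMeasure θ]
    (hsym : θ.map (fun x => -x) = θ) (g : ℝ → ℝ) (hg : Continuous g) :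
    ∫ p : ℝ × ℝ, g (-(p.1 * p.2)) ∂(θ.prod θ) = ∫ p : ℝ × ℝ, g (p.1 * p.2) ∂(θ.prod θ) := by
  have hmap : (θ.prod θ).map (Prod.map (fun x : ℝ => -x) (id : ℝ → ℝ)) = θ.prod θ := by
    rw [← Measure.map_prod_map _ _ measurable_neg measurable_id, Measure.map_id, hsym]
  have hIM := integral_map (μ := θ.prod θ) (φ := Prod.map (fun x : ℝ => -x) (id : ℝ → ℝ))
    (f := fun p : ℝ × ℝ => g (p.1 * p.2))
    (Measurable.prodMap measurable_neg measurable_id).aemeasurable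
    ((hg.comp (continuous_fst.mul continuous_snd)).aestronglyMeasurable)
  rw [hmap] at hIM
  simp only [Prod.map, id] at hIM
  calc ∫ p : ℝ × ℝ, g (-(p.1 * p.2)) ∂(θ.prod θ)
      = ∫ p : ℝ × ℝ, g (-p.1 * p.2) ∂(θ.prod θ) := by
        apply integral_congr_ae
        filter_upwards with p
        ring_nf
    _ = ∫ p : ℝ × ℝ, g (p.1 * p.2) ∂(θ.prod θ) := hIM.symm

end helpers

/-- **Lemma.** Let `θ` be a symmetric probability measure on `ℝ` supported on a finite
set, with variance `V = ∫ x² dθ > 0`, and let `β > 0` satisfy `βV ≤ 2`. Then for the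
tilted product measure `P_β(dy dz) ∝ exp(βyz) θ(dy) θ(dz)`,
`E^{P_β}[yz] ≥ V tanh(βV)`. -/
theorem tilted_covariance_lower_bound
    (θ : Measure ℝ) [IsProbabilityMeasure θ]
    (hsym : θ.map (fun x => -x) = θ)
    (hfin : ∃ s : Finset ℝ, θ ((s : Set ℝ)ᶜ) = 0)
    (V : ℝ) (hV : 0 < V) (hVar : V = ∫ x, x ^ 2 ∂θ)
    (β : ℝ) (hβ : 0 < β) (hβV : β * V ≤ 2) :
    V * Real.tanh (β * V) ≤
      (∫ p : ℝ × ℝ, p.1 * p.2 * Real.exp (β * p.1 * p.2) ∂(θ.prod θ)) /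
        (∫ p : ℝ × ℝ, Real.exp (β * p.1 * p.2) ∂(θ.prod θ)) := by
  set μ := θ.prod θ with hμ
  set s0 := β * V with hs0
  have hs00 : 0 < s0 := mul_pos hβ hV
  set N := ∫ p : ℝ × ℝ, p.1 * p.2 * Real.exp (β * p.1 * p.2) ∂μ with hN
  set D := ∫ p : ℝ × ℝ, Real.exp (β * p.1 * p.2) ∂μ with hD
  -- integrable functions
  have i1 : Integrable (fun p : ℝ × ℝ => (p.1*p.2) * Real.exp (β*(p.1*p.2))) μ :=
    integrable_helper θ hfin _ (by fun_prop)
  have i2 : Integrable (fun p : ℝ × ℝ => (-(p.1*p.2)) * Real.exp (β*(-(p.1*p.2)))) μ :=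
    integrable_helper θ hfin _ (by fun_prop)
  have i3 : Integrable (fun p : ℝ × ℝ => (p.1*p.2) * Real.sinh (β*(p.1*p.2))) μ :=
    integrable_helper θ hfin _ (by fun_prop)
  have i4 : Integrable (fun p : ℝ × ℝ => Real.cosh (β*(p.1*p.2))) μ :=
    integrable_helper θ hfin _ (by fun_prop)
  have i5 : Integrable (fun p : ℝ × ℝ => (p.1*p.2)^2) μ :=
    integrable_helper θ hfin _ (by fun_prop)
  have i2' : Integrable (fun p : ℝ × ℝ => Real.exp (β*(-(p.1*p.2)))) μ :=
    integrable_helper θ hfin _ (by fun_prop)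
  have i1' : Integrable (fun p : ℝ × ℝ => Real.exp (β*(p.1*p.2))) μ :=
    integrable_helper θ hfin _ (by fun_prop)
  -- symmetrization
  have hsym1 := sym_helper θ hsym (fun x => x * Real.exp (β*x)) (by fun_prop)
  have hsym2 := sym_helper θ hsym (fun x => Real.exp (β*x)) (by fun_prop)
  have hNsinh : ∫ p : ℝ × ℝ, (p.1*p.2) * Real.sinh (β*(p.1*p.2)) ∂μ = N := by
    calc ∫ p : ℝ × ℝ, (p.1*p.2) * Real.sinh (β*(p.1*p.2)) ∂μ
        = ∫ p : ℝ × ℝ, ((p.1*p.2) * Real.exp (β*(p.1*p.2))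
            + (-(p.1*p.2)) * Real.exp (β*(-(p.1*p.2))))/2 ∂μ := by
          apply integral_congr_ae
          filter_upwards with p
          rw [Real.sinh_eq, show β*(-(p.1*p.2)) = -(β*(p.1*p.2)) by ring]
          ring
      _ = ((∫ p : ℝ × ℝ, (p.1*p.2) * Real.exp (β*(p.1*p.2)) ∂μ)
            + ∫ p : ℝ × ℝ, (-(p.1*p.2)) * Real.exp (β*(-(p.1*p.2))) ∂μ)/2 := by
          rw [integral_div, integral_add i1 i2]
      _ = ∫ p : ℝ × ℝ, (p.1*p.2) * Real.exp (β*(p.1*p.2)) ∂μ := by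
          rw [hsym1]; ring
      _ = N := by
          rw [hN]
          apply integral_congr_ae
          filter_upwards with p
          ring_nf
  have hDcosh : ∫ p : ℝ × ℝ, Real.cosh (β*(p.1*p.2)) ∂μ = D := by
    calc ∫ p : ℝ × ℝ, Real.cosh (β*(p.1*p.2)) ∂μ
        = ∫ p : ℝ × ℝ, (Real.exp (β*(p.1*p.2)) + Real.exp (β*(-(p.1*p.2))))/2 ∂μ := by
          apply integral_congr_ae
          filter_upwards with p
          rw [Real.cosh_eq, show β*(-(p.1*p.2)) = -(β*(p.1*p.2)) by ring]
      _ = ((∫ p : ℝ × ℝ, Real.exp (β*(p.1*p.2)) ∂μ)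
            + ∫ p : ℝ × ℝ, Real.exp (β*(-(p.1*p.2))) ∂μ)/2 := by
          rw [integral_div, integral_add i1' i2']
      _ = ∫ p : ℝ × ℝ, Real.exp (β*(p.1*p.2)) ∂μ := by
          rw [hsym2]; ring
      _ = D := by
          rw [hD]
          apply integral_congr_ae
          filter_upwards with p
          ring_nf
  have hW2 : ∫ p : ℝ × ℝ, (p.1*p.2)^2 ∂μ = V^2 := by
    calc ∫ p : ℝ × ℝ, (p.1*p.2)^2 ∂μ
        = ∫ p : ℝ × ℝ, p.1^2 * p.2^2 ∂μ := by
          apply integral_congr_ae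
          filter_upwards with p
          ring
      _ = (∫ x, x^2 ∂θ) * (∫ x, x^2 ∂θ) := by
          rw [hμ]
          exact integral_prod_mul (μ := θ) (ν := θ) (fun x : ℝ => x^2) (fun x : ℝ => x^2)
      _ = V^2 := by rw [← hVar]; ring
  have hD1 : (1:ℝ) ≤ D := by
    rw [← hDcosh]
    calc (1:ℝ) = ∫ _p : ℝ × ℝ, (1:ℝ) ∂μ := by simp
      _ ≤ ∫ p : ℝ × ℝ, Real.cosh (β*(p.1*p.2)) ∂μ :=
          integral_mono (integrable_const 1) i4 (fun p => Real.one_le_cosh _)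
  have hD0 : (0:ℝ) < D := lt_of_lt_of_le one_pos hD1
  -- the key pointwise inequality
  have hb4 : s0^2*Real.sinh s0 ≤ 4*(s0*Real.cosh s0) := by
    have h1 : Real.sinh s0 ≤ s0 * Real.cosh s0 := sinh_le_mul_cosh' hs00.le
    have h2 : (0:ℝ) < Real.cosh s0 := Real.cosh_pos s0
    have h5 : 0 ≤ s0*Real.cosh s0 := mul_nonneg hs00.le h2.le
    have h3 : s0^2*Real.sinh s0 ≤ s0^2*(s0*Real.cosh s0) :=
      mul_le_mul_of_nonneg_left h1 (sq_nonneg s0)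
    have h6 : 0 ≤ (2 - s0)*(2 + s0) := mul_nonneg (by linarith) (by linarith)
    nlinarith [mul_nonneg h6 h5]
  have hkey := G_nonneg' (s0*Real.cosh s0) (s0^2*Real.sinh s0) (Real.sinh s0*Real.cosh s0 + s0)
    s0 (mul_nonneg hs00.le (Real.cosh_pos s0).le) hb4 hs00
    (by linear_combination s0^2 * Real.cosh_sq_sub_sinh_sq s0)
    (by ring)
  have hkeyall : ∀ t : ℝ, 0 ≤ 2*(s0*Real.cosh s0)*(t*Real.sinh t)
      - 2*(s0^2*Real.sinh s0)*Real.cosh t - (Real.sinh s0*Real.cosh s0 + s0)*(t^2 - s0^2) := by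
    intro t
    rcases le_or_gt 0 t with h | h
    · exact hkey t h
    · have h2 := hkey (-t) (by linarith)
      have he : 2*(s0*Real.cosh s0)*((-t)*Real.sinh (-t))
          - 2*(s0^2*Real.sinh s0)*Real.cosh (-t)
          - (Real.sinh s0*Real.cosh s0 + s0)*((-t)^2 - s0^2)
          = 2*(s0*Real.cosh s0)*(t*Real.sinh t)
          - 2*(s0^2*Real.sinh s0)*Real.cosh t
          - (Real.sinh s0*Real.cosh s0 + s0)*(t^2 - s0^2) := by
        rw [Real.sinh_neg, Real.cosh_neg]; ring
      rw [he] at h2; exact h2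
  -- integrate the pointwise inequality
  set c : ℝ := Real.sinh s0*Real.cosh s0 + s0 with hc
  have hFint : ∫ p : ℝ × ℝ, (2*(s0*Real.cosh s0)*((β*(p.1*p.2))*Real.sinh (β*(p.1*p.2)))
      - 2*(s0^2*Real.sinh s0)*Real.cosh (β*(p.1*p.2))
      - c*((β*(p.1*p.2))^2 - s0^2)) ∂μ
      = 2*(s0*Real.cosh s0)*β*N - 2*(s0^2*Real.sinh s0)*D - c*β^2*V^2 + c*s0^2 := by
    have iA : Integrable (fun p : ℝ × ℝ =>
        (2*(s0*Real.cosh s0)*β)*((p.1*p.2)*Real.sinh (β*(p.1*p.2)))) μ :=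
      integrable_helper θ hfin _ (by fun_prop)
    have iB : Integrable (fun p : ℝ × ℝ =>
        (2*(s0^2*Real.sinh s0))*Real.cosh (β*(p.1*p.2))) μ :=
      integrable_helper θ hfin _ (by fun_prop)
    have iC : Integrable (fun p : ℝ × ℝ => (c*β^2)*(p.1*p.2)^2) μ :=
      integrable_helper θ hfin _ (by fun_prop)
    have iAB : Integrable (fun p : ℝ × ℝ =>
        (2*(s0*Real.cosh s0)*β)*((p.1*p.2)*Real.sinh (β*(p.1*p.2)))
        - (2*(s0^2*Real.sinh s0))*Real.cosh (β*(p.1*p.2))) μ :=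
      integrable_helper θ hfin _ (by fun_prop)
    have iABC : Integrable (fun p : ℝ × ℝ =>
        (2*(s0*Real.cosh s0)*β)*((p.1*p.2)*Real.sinh (β*(p.1*p.2)))
        - (2*(s0^2*Real.sinh s0))*Real.cosh (β*(p.1*p.2))
        - (c*β^2)*(p.1*p.2)^2) μ :=
      integrable_helper θ hfin _ (by fun_prop)
    calc ∫ p : ℝ × ℝ, (2*(s0*Real.cosh s0)*((β*(p.1*p.2))*Real.sinh (β*(p.1*p.2)))
          - 2*(s0^2*Real.sinh s0)*Real.cosh (β*(p.1*p.2))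
          - c*((β*(p.1*p.2))^2 - s0^2)) ∂μ
        = ∫ p : ℝ × ℝ, ((2*(s0*Real.cosh s0)*β)*((p.1*p.2)*Real.sinh (β*(p.1*p.2)))
          - (2*(s0^2*Real.sinh s0))*Real.cosh (β*(p.1*p.2))
          - (c*β^2)*(p.1*p.2)^2 + c*s0^2) ∂μ := by
          apply integral_congr_ae
          filter_upwards with p
          ring
      _ = (∫ p : ℝ × ℝ, ((2*(s0*Real.cosh s0)*β)*((p.1*p.2)*Real.sinh (β*(p.1*p.2)))
          - (2*(s0^2*Real.sinh s0))*Real.cosh (β*(p.1*p.2))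
          - (c*β^2)*(p.1*p.2)^2) ∂μ) + c*s0^2 := by
          rw [integral_add iABC (integrable_const _), integral_const]
          simp
      _ = 2*(s0*Real.cosh s0)*β*N - 2*(s0^2*Real.sinh s0)*D - c*β^2*V^2 + c*s0^2 := by
          rw [integral_sub iAB iC, integral_sub iA iB,
            integral_const_mul, integral_const_mul, integral_const_mul,
            hNsinh, hDcosh, hW2]
  have hFnn : (0:ℝ) ≤ 2*(s0*Real.cosh s0)*β*N - 2*(s0^2*Real.sinh s0)*D - c*β^2*V^2 + c*s0^2 := by
    rw [← hFint]
    apply integral_nonneg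
    intro p
    exact hkeyall (β*(p.1*p.2))
  have hcan : c*β^2*V^2 = c*s0^2 := by rw [hs0]; ring
  have hmain : 0 ≤ 2*(s0*Real.cosh s0)*β*N - 2*(s0^2*Real.sinh s0)*D := by linarith
  have hfact : 2*(s0*Real.cosh s0)*β*N - 2*(s0^2*Real.sinh s0)*D
      = 2*β^2*V*(N*Real.cosh s0 - V*Real.sinh s0*D) := by rw [hs0]; ring
  have hND : V*Real.sinh s0*D ≤ N*Real.cosh s0 := by
    rw [hfact] at hmain
    nlinarith [hmain, mul_pos (mul_pos two_pos (mul_pos hβ hβ)) hV]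
  rw [le_div_iff₀ hD0, Real.tanh_eq_sinh_div_cosh]
  calc V * (Real.sinh s0 / Real.cosh s0) * D
      = (V*Real.sinh s0*D)/Real.cosh s0 := by ring
    _ ≤ N := by
        rw [div_le_iff₀ (Real.cosh_pos s0)]
        exact hND
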